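/- Let λ ∈ ℂ and let M be the ℂ-linear span of the monomials z₀^{j₀}·(z₁−λ)^{j₁} with j₀, j₁ ∈ ℕ₀, considered inside the Laurent polynomial ring ℂ[z₀, z₀⁻¹, z₁]. Then the only ideal of ℂ[z₀, z₀⁻¹, z₁] contained in M is the zero ideal. -/

import Mathlib

open Polynomial

noncomputable def R0 : Subalgebra ℂ (LaurentPolynomial ℂ) where
  carrier := {a | ∀ m : ℤ, m < 0 → a.coeff m = 0}
  add_mem' := by
    intro a b ha hb m hm
    show (a + b).coeff m = 0
    rw [AddMonoidAlgebra.coeff_add, Finsupp.add_apply, ha m hm, hb m hm, add_zero]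
  mul_mem' := by
    intro a b ha hb m hm
    show (a * b).coeff m = 0
    rw [AddMonoidAlgebra.coeff_mul]
    refine Finset.sum_eq_zero fun i _ => Finset.sum_eq_zero fun j _ => ?_
    rcases lt_or_ge i 0 with h | h
    · simp [ha i h]
    · rcases lt_or_ge j 0 with h' | h'
      · simp [hb j h']
      · have : ¬ (i + j = m) := by omega
        simp [this]
  algebraMap_mem' := by
    intro c m hm
    show (AddMonoidAlgebra.single 0 c).coeff m = 0
    rw [AddMonoidAlgebra.coeff_single, Finsupp.single_apply, if_neg (by omega)]

noncomputable def N0 : Subalgebra ℂ (Polynomial (LaurentPolynomial ℂ)) where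
  carrier := {p | ∀ k : ℕ, p.coeff k ∈ R0}
  add_mem' := by
    intro a b ha hb k
    rw [Polynomial.coeff_add]
    exact add_mem (ha k) (hb k)
  mul_mem' := by
    intro a b ha hb k
    rw [Polynomial.coeff_mul]
    exact sum_mem fun ij _ => mul_mem (ha ij.1) (hb ij.2)
  algebraMap_mem' := by
    intro c k
    simp only [Polynomial.algebraMap_apply, Polynomial.coeff_C]
    split
    · exact Subalgebra.algebraMap_mem R0 c
    · exact zero_mem _

lemma X_mem_N0 : (X : Polynomial (LaurentPolynomial ℂ)) ∈ N0 := by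
  intro k
  rw [Polynomial.coeff_X]
  split
  · intro m hm
    show ((1 : LaurentPolynomial ℂ)).coeff m = 0
    rw [AddMonoidAlgebra.one_def, AddMonoidAlgebra.coeff_single, Finsupp.single_apply, if_neg (by omega)]
  · exact zero_mem _

lemma CT_mem_N0 : (C (LaurentPolynomial.T 1) : Polynomial (LaurentPolynomial ℂ)) ∈ N0 := by
  intro k
  rw [Polynomial.coeff_C]
  split
  · intro m hm
    show (AddMonoidAlgebra.single (1:ℤ) (1:ℂ)).coeff m = 0
    rw [AddMonoidAlgebra.coeff_single, Finsupp.single_apply, if_neg (by omega)]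
  · exact zero_mem _

lemma CC_mem_N0 (lam : ℂ) :
    (C (LaurentPolynomial.C lam) : Polynomial (LaurentPolynomial ℂ)) ∈ N0 := by
  intro k
  rw [Polynomial.coeff_C]
  split
  · intro m hm
    show (AddMonoidAlgebra.single (0:ℤ) lam).coeff m = 0
    rw [AddMonoidAlgebra.coeff_single, Finsupp.single_apply, if_neg (by omega)]
  · exact zero_mem _

theorem span_monomials_contains_no_ideal (lam : ℂ) :
    ∀ I : Ideal (Polynomial (LaurentPolynomial ℂ)),
      (I : Set (Polynomial (LaurentPolynomial ℂ))) ⊆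
        (Submodule.span ℂ
          {p : Polynomial (LaurentPolynomial ℂ) |
            ∃ j₀ j₁ : ℕ,
              p = (C (LaurentPolynomial.T 1)) ^ j₀ *
                  (X - C (LaurentPolynomial.C lam)) ^ j₁} :
          Set (Polynomial (LaurentPolynomial ℂ))) →
      I = ⊥ := by
  intro I hI
  -- span is contained in N0
  have hspan : (Submodule.span ℂ
      {p : Polynomial (LaurentPolynomial ℂ) |
        ∃ j₀ j₁ : ℕ,
          p = (C (LaurentPolynomial.T 1)) ^ j₀ *
              (X - C (LaurentPolynomial.C lam)) ^ j₁}) ≤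
      (Subalgebra.toSubmodule N0) := by
    rw [Submodule.span_le]
    rintro p ⟨j₀, j₁, rfl⟩
    exact Subalgebra.mem_toSubmodule N0 |>.mpr <|
      mul_mem (pow_mem CT_mem_N0 j₀)
        (pow_mem (sub_mem X_mem_N0 (CC_mem_N0 lam)) j₁)
  rw [eq_bot_iff]
  intro p hp
  rw [Submodule.mem_bot]
  by_contra hne
  -- pick nonzero coefficient
  have hk : p.coeff p.natDegree ≠ 0 := by
    rw [← Polynomial.leadingCoeff]; exact Polynomial.leadingCoeff_ne_zero.mpr hne
  set k := p.natDegree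
  set a := p.coeff k with ha
  obtain ⟨m, hm⟩ : ∃ m : ℤ, a.coeff m ≠ 0 := by
    by_contra h
    push_neg at h
    exact hk (AddMonoidAlgebra.coeff_injective (Finsupp.ext h))
  -- multiply by C (LaurentPolynomial.T (-1 - m))
  set q := C (LaurentPolynomial.T (-1 - m)) * p with hq
  have hqI : q ∈ I := I.mul_mem_left _ hp
  have hqN : q ∈ N0 := hspan (hI hqI)
  have h1 : (q.coeff k).coeff (-1 : ℤ) = 0 := hqN k (-1) (by omega)
  have h2 : q.coeff k = LaurentPolynomial.T (-1 - m) * a := by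
    rw [hq, Polynomial.coeff_C_mul]
  rw [h2] at h1
  have h3 : ((LaurentPolynomial.T (-1 - m) * a : LaurentPolynomial ℂ)).coeff (-1 : ℤ) = a.coeff m := by
    show ((AddMonoidAlgebra.single (-1 - m) (1:ℂ) * a : LaurentPolynomial ℂ)).coeff (-1 : ℤ) = a.coeff m
    rw [AddMonoidAlgebra.coeff_single_mul_apply (x := a) (r := (1 : ℂ)) (g := -1 - m) (h := (-1 : ℤ)), one_mul,
      show -(-1 - m) + -1 = m by ring]
  rw [h3] at h1
  exact hm h1
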